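/- Let A be a unital simple C*-algebra and let e ∈ A be a nonzero projection. Then there exist finitely many elements v₁, …, v_m ∈ A with ‖v_k‖ ≤ 1 for each k such that Σ_{k=1}^{m} v_k* e v_k = 1. -/

import Mathlib

/-- In a unital simple C*-algebra, for every nonzero projection `e`
there are finitely many elements `v 1, …, v m` of norm at most one with
`∑ k, (v k)* * e * v k = 1`. -/
theorem stmt_10 {A : Type*} [NormedRing A] [StarRing A] [CStarRing A]
    [NormedAlgebra ℂ A] [StarModule ℂ A] [CompleteSpace A] [IsSimpleRing A]
    (e : A) (he : IsSelfAdjoint e) (he2 : e * e = e) (hene : e ≠ 0) :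
    ∃ (m : ℕ) (v : Fin m → A), (∀ k, ‖v k‖ ≤ 1) ∧
      ∑ k, star (v k) * e * v k = 1 := by
  letI : CStarAlgebra A := ⟨⟩
  letI : PartialOrder A := CStarAlgebra.spectralOrder A
  letI : StarOrderedRing A := CStarAlgebra.spectralOrderedRing A
  haveI : Nontrivial A := nontrivial_of_ne e 0 hene
  have he' : star e = e := he
  have hepos : (0 : A) ≤ e := by
    have := star_mul_self_nonneg e
    rwa [he', he2] at this
  -- The set of finite sums ∑ aᵢ e bᵢ forms a two-sided ideal.
  set T : Set A := {x | ∃ n : ℕ, ∃ a b : Fin n → A, x = ∑ i, a i * e * b i} with hT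
  have hzero : (0 : A) ∈ T := ⟨0, ![], ![], by simp⟩
  have hadd : ∀ {x y : A}, x ∈ T → y ∈ T → x + y ∈ T := by
    rintro x y ⟨n, a, b, rfl⟩ ⟨m, a', b', rfl⟩
    refine ⟨n + m, Fin.append a a', Fin.append b b', ?_⟩
    rw [Fin.sum_univ_add]
    simp [Fin.append_left, Fin.append_right]
  have hneg : ∀ {x : A}, x ∈ T → -x ∈ T := by
    rintro x ⟨n, a, b, rfl⟩
    exact ⟨n, fun i => -a i, b, by simp [Finset.sum_neg_distrib]⟩
  have hml : ∀ {x y : A}, y ∈ T → x * y ∈ T := by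
    rintro x y ⟨n, a, b, rfl⟩
    exact ⟨n, fun i => x * a i, b, by rw [Finset.mul_sum]; simp [mul_assoc]⟩
  have hmr : ∀ {x y : A}, x ∈ T → x * y ∈ T := by
    rintro x y ⟨n, a, b, rfl⟩
    exact ⟨n, a, fun i => b i * y, by rw [Finset.sum_mul]; simp [mul_assoc]⟩
  let I : TwoSidedIdeal A := TwoSidedIdeal.mk' T hzero hadd hneg hml hmr
  have heI : e ∈ I := by
    rw [TwoSidedIdeal.mem_mk']
    exact ⟨1, ![1], ![1], by simp⟩
  have h1 : (1 : A) ∈ I := IsSimpleRing.one_mem_of_ne_zero_mem I hene heI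
  rw [TwoSidedIdeal.mem_mk'] at h1
  obtain ⟨n, a, b, hab⟩ := h1
  -- `d i = (a i)* + b i`; then `b0 := ∑ (d i)* e (d i) = p + q + 2` with `p, q ≥ 0`.
  set d : Fin n → A := fun i => star (a i) + b i with hd
  set b0 : A := ∑ i, star (d i) * e * d i with hb0
  have hb0nonneg : (0 : A) ≤ b0 :=
    Finset.sum_nonneg fun i _ => star_left_conjugate_nonneg hepos _
  have hb0sa : IsSelfAdjoint b0 := IsSelfAdjoint.of_nonneg hb0nonneg
  have hexp : b0 = (∑ i, a i * e * star (a i)) + (∑ i, star (b i) * e * b i)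
      + (1 + 1) := by
    have hstar1 : ∑ i, star (b i) * e * star (a i) = 1 := by
      calc ∑ i, star (b i) * e * star (a i) = star (∑ i, a i * e * b i) := by
            rw [star_sum]
            refine Finset.sum_congr rfl fun i _ => ?_
            simp [star_mul, he', mul_assoc]
        _ = 1 := by rw [← hab, star_one]
    calc b0 = ∑ i, ((a i + star (b i)) * e * (star (a i) + b i)) := by
            simp [hb0, hd, star_add]
      _ = ∑ i, (a i * e * star (a i) + a i * e * b i
            + (star (b i) * e * star (a i) + star (b i) * e * b i)) := by
            refine Finset.sum_congr rfl fun i _ => ?_; noncomm_ring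
      _ = (∑ i, a i * e * star (a i)) + (∑ i, a i * e * b i)
            + ((∑ i, star (b i) * e * star (a i)) + ∑ i, star (b i) * e * b i) := by
            rw [Finset.sum_add_distrib, Finset.sum_add_distrib, Finset.sum_add_distrib]
      _ = _ := by rw [← hab, hstar1]; abel
  -- `2 ≤ b0`, so the spectrum of `b0` lies in `[2, ∞)`.
  have h2le : algebraMap ℝ A 2 ≤ b0 := by
    have hA2 : algebraMap ℝ A 2 = 1 + 1 := by
      rw [map_ofNat]; norm_num
    rw [hA2, hexp]
    have hp : (0:A) ≤ ∑ i, a i * e * star (a i) :=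
      Finset.sum_nonneg fun i _ => star_right_conjugate_nonneg hepos _
    have hq : (0:A) ≤ ∑ i, star (b i) * e * b i :=
      Finset.sum_nonneg fun i _ => star_left_conjugate_nonneg hepos _
    calc (1:A) + 1 = 0 + 0 + (1 + 1) := by abel
      _ ≤ _ := by gcongr
  have hsp : ∀ x ∈ spectrum ℝ b0, (2:ℝ) ≤ x :=
    (algebraMap_le_iff_le_spectrum hb0sa).mp h2le
  -- `c = b0 ^ (-1/2)` via continuous functional calculus.
  set f : ℝ → ℝ := fun x => (Real.sqrt x)⁻¹ with hf
  have hfc : ContinuousOn f (spectrum ℝ b0) := by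
    apply ContinuousOn.inv₀ (Real.continuous_sqrt.continuousOn)
    intro x hx
    have := hsp x hx
    positivity
  set c : A := cfc f b0 with hc
  have hcsa : IsSelfAdjoint c := cfc_predicate f b0
  have hkey : c * b0 * c = 1 := by
    have h1 : cfc (fun x => f x * x * f x) b0 = c * b0 * c := by
      rw [cfc_mul (fun x => f x * x) _ b0 (ContinuousOn.mul hfc (continuousOn_id' _)) hfc,
        cfc_mul _ _ b0 hfc (continuousOn_id' _), cfc_id' ℝ b0]
    have h2 : (spectrum ℝ b0).EqOn (fun x => f x * x * f x) (fun _ => (1:ℝ)) := by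
      intro x hx
      have hx2 : (2:ℝ) ≤ x := hsp x hx
      have hxpos : (0:ℝ) < x := by linarith
      have hsne : Real.sqrt x ≠ 0 := by positivity
      show (Real.sqrt x)⁻¹ * x * (Real.sqrt x)⁻¹ = 1
      rw [← Real.mul_self_sqrt hxpos.le]
      field_simp
      rw [Real.sqrt_sq (Real.sqrt_nonneg x)]
    rw [← h1, cfc_congr h2, cfc_const_one ℝ b0]
  -- `v i = d i * c` gives `∑ vᵢ* e vᵢ = c b0 c = 1`.
  set v : Fin n → A := fun i => d i * c with hv
  have hsumv : ∑ i, star (v i) * e * v i = 1 := by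
    have : ∑ i, star (v i) * e * v i = star c * b0 * c := by
      rw [hb0, Finset.mul_sum, Finset.sum_mul]
      refine Finset.sum_congr rfl fun i _ => ?_
      simp [hv, star_mul, mul_assoc]
    rw [this, hcsa.star_eq, hkey]
  -- Normalize: `w i = e * v i` has norm at most 1.
  refine ⟨n, fun i => e * v i, fun k => ?_, ?_⟩
  · have hterm : star (e * v k) * (e * v k) = star (v k) * e * v k := by
      simp only [star_mul, he']
      rw [mul_assoc (star (v k)), ← mul_assoc e, he2, ← mul_assoc]
    have hle : star (v k) * e * v k ≤ 1 := by
      rw [← hsumv]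
      exact Finset.single_le_sum (f := fun i => star (v i) * e * v i)
        (fun i _ => star_left_conjugate_nonneg hepos _) (Finset.mem_univ k)
    have hnn : (0:A) ≤ star (v k) * e * v k := star_left_conjugate_nonneg hepos _
    have hnorm : ‖star (v k) * e * v k‖ ≤ 1 := by
      calc ‖star (v k) * e * v k‖ ≤ ‖(1:A)‖ :=
            CStarAlgebra.norm_le_norm_of_nonneg_of_le hnn hle
        _ = 1 := norm_one
    have hsq : ‖e * v k‖ * ‖e * v k‖ ≤ 1 := by
      rw [← CStarRing.norm_star_mul_self, hterm]; exact hnorm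
    nlinarith [norm_nonneg (e * v k)]
  · have he3 : ∀ y : A, e * (e * y) = e * y := fun y => by rw [← mul_assoc, he2]
    have h : ∀ i, star (e * v i) * e * (e * v i) = star (v i) * e * v i := by
      intro i
      simp [star_mul, he', mul_assoc, he3]
    simp_rw [h]
    exact hsumv
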